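/- The number of canonical labeled k-ary trees with n nodes (equivalently, unlabeled k-ary trees with n nodes) is the n-th Fuss–Catalan number (1/(kn+1))·C(kn+1, n). -/

import Mathlib

/-- `k`-ary trees: each internal node carries a label and a list of children
(ordered left to right, with `leaf` marking absent subtrees). -/
inductive KTree where
  | leaf : KTree
  | node : ℕ → List KTree → KTree

/-- The list of labels of a `k`-ary tree. -/
def KTree.labels : KTree → List ℕ
  | .leaf => []
  | .node x c => x :: (c.attach.map (fun t => KTree.labels t.1)).flatten
decreasing_by
  have := List.sizeOf_lt_of_mem t.2
  simp only [KTree.node.sizeOf_spec]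
  omega

/-- Every internal node has exactly `k` (possibly absent) children,
i.e. each node has at most `k` children, distinguished by positions `1,...,k`. -/
inductive KTree.Arity (k : ℕ) : KTree → Prop
  | leaf : Arity k .leaf
  | node (x : ℕ) (c : List KTree) : c.length = k → (∀ t ∈ c, Arity k t) → Arity k (.node x c)

/-- Labels increase along every root-to-leaf path. -/
inductive KTree.Incr : KTree → Prop
  | leaf : Incr .leaf
  | node (x : ℕ) (c : List KTree) :
      (∀ t ∈ c, ∀ y ∈ KTree.labels t, x < y) →
      (∀ t ∈ c, Incr t) → Incr (.node x c)

/-- A labeled `k`-ary tree with `n` nodes: labels are exactly `{1,...,n}`,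
increasing along root-to-leaf paths. -/
def IsLabeledKTree (k n : ℕ) (t : KTree) : Prop :=
  t.Arity k ∧ t.labels.Perm (List.range' 1 n) ∧ t.Incr

/-- The node labeled `b` is weakly right of the node labeled `a` in a `k`-ary tree:
`b` is a descendant of `a`, or the two nodes branch at a common ancestor with `a`
in a strictly more-left subtree than `b`. -/
inductive KTree.WR : KTree → ℕ → ℕ → Prop
  | desc (x : ℕ) (c : List KTree) (a b : ℕ) :
      x = a → (∃ t ∈ c, b ∈ KTree.labels t) → WR (.node x c) a b
  | branch (x : ℕ) (c : List KTree) (a b : ℕ) :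
      (∃ i j : ℕ, i < j ∧ j < c.length ∧
        a ∈ KTree.labels (c.getD i .leaf) ∧ b ∈ KTree.labels (c.getD j .leaf)) →
      WR (.node x c) a b
  | sub (x : ℕ) (c : List KTree) (a b : ℕ) (t : KTree) :
      t ∈ c → WR t a b → WR (.node x c) a b

/-- A labeled `k`-ary tree is canonical if for every pair of labels `l₁ < l₂`,
the node labeled `l₂` is weakly right of the node labeled `l₁`. -/
def KTree.CanonicalK (t : KTree) : Prop :=
  ∀ l₁ l₂ : ℕ, l₁ ∈ t.labels → l₂ ∈ t.labels → l₁ < l₂ → t.WR l₁ l₂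

namespace KTree

theorem labels_node (x : ℕ) (c : List KTree) :
    labels (.node x c) = x :: (c.map labels).flatten := by
  rw [labels]
  congr 1
  rw [List.map_congr_left (fun t _ => rfl)]
  exact congrArg _ (List.attach_map_val (l := c) (f := labels))

/-- structural induction -/
theorem ind (P : KTree → Prop) (h1 : P .leaf)
    (h2 : ∀ x c, (∀ t ∈ c, P t) → P (.node x c)) : ∀ t, P t := by
  have key : ∀ n t, sizeOf t ≤ n → P t := by
    intro n
    induction n with
    | zero => intro t ht; cases t with
      | leaf => exact h1
      | node x c => simp [KTree.node.sizeOf_spec] at ht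
    | succ n ih =>
      intro t ht
      cases t with
      | leaf => exact h1
      | node x c =>
        refine h2 x c (fun u hu => ih u ?_)
        have := List.sizeOf_lt_of_mem hu
        simp only [KTree.node.sizeOf_spec] at ht
        omega
  exact fun t => key (sizeOf t) t le_rfl

def enc : KTree → List Bool
  | .leaf => [false]
  | .node _ c => true :: (c.attach.map (fun t => enc t.1)).flatten
decreasing_by
  have := List.sizeOf_lt_of_mem t.2
  simp only [KTree.node.sizeOf_spec]
  omega

theorem enc_node (x : ℕ) (c : List KTree) :
    enc (.node x c) = true :: (c.map enc).flatten := by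
  rw [enc]
  congr 1
  exact congrArg _ (List.attach_map_val (l := c) (f := enc))

end KTree



inductive OKC (k : ℕ) : List Bool → Prop
  | leaf : OKC k [false]
  | node (ws : List (List Bool)) : ws.length = k → (∀ w ∈ ws, OKC k w) →
      OKC k (true :: ws.flatten)

def dd (k : ℕ) (w : List Bool) : ℤ := k * (w.count true) - w.length

theorem dd_nil (k : ℕ) : dd k [] = 0 := by simp [dd]

theorem dd_append (k : ℕ) (u v : List Bool) : dd k (u ++ v) = dd k u + dd k v := by
  simp [dd, List.count_append]; ring

theorem dd_cons (k : ℕ) (a : Bool) (w : List Bool) :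
    dd k (a :: w) = (if a then (k : ℤ) - 1 else -1) + dd k w := by
  cases a <;> simp [dd, List.count_cons] <;> ring

def GoodP (k : ℕ) (w : List Bool) : Prop :=
  dd k w = -1 ∧ ∀ p, p <+: w → p ≠ w → 0 ≤ dd k p

theorem dd_flatten_good {k : ℕ} {ws : List (List Bool)} (h : ∀ u ∈ ws, GoodP k u) :
    dd k ws.flatten = -(ws.length : ℤ) := by
  induction ws with
  | nil => simp [dd_nil]
  | cons u ws ih =>
    rw [List.flatten_cons, dd_append, (h u (by simp)).1, ih (fun u hu => h u (by simp [hu]))]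
    simp

/-- decomposition of a proper prefix of a flatten -/
theorem prefix_flatten {α : Type*} : ∀ (ws : List (List α)) (p : List α),
    p <+: ws.flatten → p ≠ ws.flatten →
    ∃ l₁ u l₂ r, ws = l₁ ++ u :: l₂ ∧ r <+: u ∧ r ≠ u ∧ p = l₁.flatten ++ r := by
  intro ws
  induction ws with
  | nil => intro p h hne; simp at h; exact absurd h (by simpa using hne)
  | cons u ws ih =>
    intro p h hne
    rw [List.flatten_cons] at h
    by_cases hu : u <+: p
    · obtain ⟨p', rfl⟩ := hu
      rw [List.prefix_append_right_inj] at h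
      have hne' : p' ≠ ws.flatten := by
        rintro rfl; exact hne (by rw [List.flatten_cons])
      obtain ⟨l₁, u', l₂, r, h1, h2, h3, h4⟩ := ih p' h hne'
      exact ⟨u :: l₁, u', l₂, r, by rw [h1]; rfl, h2, h3, by rw [h4, List.flatten_cons, List.append_assoc]⟩
    · rcases List.prefix_or_prefix_of_prefix h (List.prefix_append u ws.flatten) with h' | h'
      · refine ⟨[], u, ws, p, rfl, h', ?_, by simp⟩
        rintro rfl; exact hu List.prefix_rfl
      · exact absurd h' hu

theorem okc_good {k : ℕ} (hk : 1 ≤ k) {w : List Bool} (h : OKC k w) : GoodP k w := by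
  induction h with
  | leaf =>
    constructor
    · simp [dd]
    · intro p hp hne
      rcases List.prefix_cons_iff.1 hp with rfl | ⟨t, rfl, ht⟩
      · simp [dd_nil]
      · simp at ht; subst ht; exact absurd rfl hne
  | node ws hlen hall ih =>
    have hgood : ∀ u ∈ ws, GoodP k u := fun u hu => ih u hu
    constructor
    · rw [dd_cons, dd_flatten_good hgood, hlen]; simp; ring
    · intro p hp hne
      rcases List.prefix_cons_iff.1 hp with rfl | ⟨q, rfl, hq⟩
      · simp [dd_nil]
      · have hqne : q ≠ ws.flatten := by rintro rfl; exact hne rfl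
        obtain ⟨l₁, u, l₂, r, h1, h2, h3, h4⟩ := prefix_flatten ws q hq hqne
        have hl₁ : ∀ v ∈ l₁, GoodP k v := fun v hv => hgood v (by rw [h1]; simp [hv])
        have hu : GoodP k u := hgood u (by rw [h1]; simp)
        have hr : 0 ≤ dd k r := hu.2 r h2 h3
        have hlen1 : (l₁.length : ℤ) ≤ (k : ℤ) - 1 := by
          have : l₁.length + 1 ≤ ws.length := by rw [h1]; simp
          rw [hlen] at this; push_cast; omega
        rw [h4, dd_cons, dd_append, dd_flatten_good hl₁]
        simp only [if_true]
        omega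

theorem dd_take_step {k : ℕ} {w : List Bool} {j : ℕ} (hj : j < w.length) :
    dd k (w.take j) - 1 ≤ dd k (w.take (j+1)) := by
  have h1 : w.take (j+1) = w.take j ++ [w[j]] := by
    rw [List.take_succ, List.getElem?_eq_getElem hj]; rfl
  rw [h1, dd_append]
  have h2 : -1 ≤ dd k [w[j]] := by
    cases h : w[j] <;> simp [dd, h] <;> omega
  omega

theorem prefix_eq_take {α : Type*} {p w : List α} (h : p <+: w) : p = w.take p.length :=
  List.prefix_iff_eq_take.1 h

/-- the first-passage split -/
theorem first_block {k : ℕ} {w : List Bool} (hw : dd k w ≤ -1) :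
    ∃ u, u <+: w ∧ GoodP k u := by
  classical
  have hex : ∃ j, dd k (w.take j) ≤ -1 := ⟨w.length, by simpa using hw⟩
  set j₀ := Nat.find hex with hj₀def
  have hj₀ : dd k (w.take j₀) ≤ -1 := Nat.find_spec hex
  have hmin : ∀ i < j₀, -1 < dd k (w.take i) := fun i hi =>
    lt_of_not_ge (fun hc => Nat.find_min hex hi hc)
  have hj₀pos : 0 < j₀ := by
    rcases Nat.eq_zero_or_pos j₀ with h | h
    · rw [h] at hj₀; simp [dd_nil] at hj₀
    · exact h
  have hj₀le : j₀ ≤ w.length := by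
    by_contra hlt
    push_neg at hlt
    have := hmin w.length hlt
    rw [List.take_length] at this
    omega
  have heq : dd k (w.take j₀) = -1 := by
    have h1 := hmin (j₀ - 1) (by omega)
    have h2 := dd_take_step (k := k) (w := w) (j := j₀ - 1) (by omega)
    rw [show j₀ - 1 + 1 = j₀ from by omega] at h2
    omega
  refine ⟨w.take j₀, List.take_prefix _ _, heq, ?_⟩
  intro p hp hne
  have hpt : p = w.take p.length :=
    prefix_eq_take (hp.trans (List.take_prefix _ _))
  have hplen : p.length < j₀ := by
    have hle : p.length ≤ (w.take j₀).length := hp.length_le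
    rw [List.length_take] at hle
    have hle' : p.length ≤ j₀ := le_trans hle (min_le_left _ _)
    rcases lt_or_eq_of_le hle' with h | h
    · exact h
    · exact absurd (by rw [hpt, h]) hne
  have := hmin _ hplen
  rw [← hpt] at this
  omega

theorem split_blocks {k : ℕ} : ∀ (m : ℕ) (w : List Bool), dd k w = -(m:ℤ) →
    (∀ p, p <+: w → p ≠ w → -(m:ℤ) < dd k p) →
    ∃ ws : List (List Bool), ws.length = m ∧ (∀ u ∈ ws, GoodP k u) ∧ w = ws.flatten := by
  intro m
  induction m with
  | zero =>
    intro w hw hpre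
    have : w = [] := by
      by_contra hne
      have := hpre [] ⟨w, rfl⟩ (fun h => hne h.symm)
      rw [dd_nil] at this
      simp at this
    exact ⟨[], rfl, by simp, by simp [this]⟩
  | succ m ih =>
    intro w hw hpre
    obtain ⟨u, ⟨v, rfl⟩, hu⟩ := first_block (k := k) (w := w) (by rw [hw]; push_cast; omega)
    have hdv : dd k v = -(m:ℤ) := by
      have := dd_append k u v
      rw [hw, hu.1] at this
      push_cast at this ⊢
      omega
    have hprev : ∀ p, p <+: v → p ≠ v → -(m:ℤ) < dd k p := by
      intro p hp hne
      have h1 : u ++ p <+: u ++ v := (List.prefix_append_right_inj u).2 hp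
      have h2 : u ++ p ≠ u ++ v := fun h => hne (List.append_cancel_left h)
      have := hpre _ h1 h2
      rw [dd_append, hu.1] at this
      push_cast at this ⊢
      omega
    obtain ⟨ws, hlen, hall, rfl⟩ := ih v hdv hprev
    exact ⟨u :: ws, by simp [hlen], by intro u' hu'; rcases List.mem_cons.1 hu' with rfl | h; exacts [hu, hall _ h], by simp⟩

theorem good_okc {k : ℕ} (hk : 1 ≤ k) : ∀ (N : ℕ) (w : List Bool), w.length ≤ N →
    GoodP k w → OKC k w := by
  intro N
  induction N with
  | zero =>
    intro w hlen hg
    have hw : w = [] := List.length_eq_zero_iff.1 (Nat.le_zero.1 hlen)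
    subst hw
    exact absurd hg.1 (by rw [dd_nil]; norm_num)
  | succ N ih =>
    intro w hlen hg
    match w with
    | [] => exact absurd hg.1 (by rw [dd_nil]; norm_num)
    | false :: w' =>
      have hw' : w' = [] := by
        by_contra hne
        have h1 : [false] <+: false :: w' := ⟨w', rfl⟩
        have h2 : ([false] : List Bool) ≠ false :: w' := by
          intro h; exact hne (by injection h with _ h; exact h.symm)
        have := hg.2 [false] h1 h2
        simp [dd] at this
      subst hw'
      exact OKC.leaf
    | true :: w' =>
      have hdw' : dd k w' = -(k:ℤ) := by
        have := hg.1
        rw [dd_cons] at this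
        simp only [if_true] at this
        omega
      have hprew' : ∀ p, p <+: w' → p ≠ w' → -(k:ℤ) < dd k p := by
        intro p hp hne
        have h1 : true :: p <+: true :: w' := by
          obtain ⟨t, rfl⟩ := hp; exact ⟨t, rfl⟩
        have h2 : true :: p ≠ true :: w' := by
          intro h; injection h with _ h; exact hne h
        have := hg.2 _ h1 h2
        rw [dd_cons] at this
        simp only [if_true] at this
        omega
      obtain ⟨ws, hwslen, hall, rfl⟩ := split_blocks k w' hdw' hprew'
      refine OKC.node ws hwslen (fun u hu => ih u ?_ (hall u hu))
      have : u.length ≤ ws.flatten.length := (List.sublist_flatten_of_mem hu).length_le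
      simp only [List.length_cons] at hlen
      omega

theorem dd_perm {k : ℕ} {w w' : List Bool} (h : w.Perm w') : dd k w = dd k w' := by
  simp [dd, h.count_eq, h.length_eq]

theorem good_rotate_unique {k : ℕ} {w : List Bool} (h1 : GoodP k w) {j : ℕ}
    (hj : j < w.length) (h2 : GoodP k (w.rotate j)) : j = 0 := by
  by_contra hne
  have hjpos : 0 < j := Nat.pos_of_ne_zero hne
  have htake : 0 ≤ dd k (w.take j) := by
    refine h1.2 _ (List.take_prefix _ _) ?_
    intro h
    have := congrArg List.length h
    rw [List.length_take] at this
    omega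
  have hrot : w.rotate j = w.drop j ++ w.take j :=
    List.rotate_eq_drop_append_take (le_of_lt hj)
  have hdrop : 0 ≤ dd k (w.drop j) := by
    refine h2.2 _ (by rw [hrot]; exact List.prefix_append _ _) ?_
    intro h
    have := congrArg List.length h
    rw [List.length_rotate, List.length_drop] at this
    omega
  have hsum : dd k (w.take j) + dd k (w.drop j) = dd k w := by
    rw [← dd_append, List.take_append_drop]
  rw [h1.1] at hsum
  omega

theorem good_rotate_exists {k : ℕ} {w : List Bool} (hw : dd k w = -1) :
    ∃ i < w.length, GoodP k (w.rotate i) := by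
  classical
  have hNpos : 0 < w.length := by
    rcases Nat.eq_zero_or_pos w.length with h | h
    · exfalso
      rw [List.length_eq_zero_iff.1 h] at hw
      rw [dd_nil] at hw
      exact absurd hw (by norm_num)
    · exact h
  have hFne : ((Finset.range (w.length+1)).image (fun j => dd k (w.take j))).Nonempty :=
    ⟨dd k (w.take 0), Finset.mem_image_of_mem _ (Finset.mem_range.2 (by omega))⟩
  set μ : ℤ := ((Finset.range (w.length+1)).image (fun j => dd k (w.take j))).min' hFne with hμ
  have hμle : ∀ m ≤ w.length, μ ≤ dd k (w.take m) := fun m hm =>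
    Finset.min'_le _ _ (Finset.mem_image_of_mem _ (Finset.mem_range.2 (by omega)))
  have hex : ∃ j, j ≤ w.length ∧ dd k (w.take j) = μ := by
    obtain ⟨j, hj, hjeq⟩ := Finset.mem_image.1 (Finset.min'_mem _ hFne)
    exact ⟨j, Nat.lt_succ_iff.1 (Finset.mem_range.1 hj), hjeq⟩
  obtain ⟨hj₀le, hj₀eq⟩ := Nat.find_spec hex
  set j₀ := Nat.find hex with hj₀def
  have hfirst : ∀ i < j₀, μ < dd k (w.take i) := by
    intro i hi
    have hnot := Nat.find_min hex hi
    push_neg at hnot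
    exact lt_of_le_of_ne (hμle i (by omega)) (fun h => hnot (by omega) h.symm)
  have hμneg : μ ≤ -1 := by
    have := hμle w.length le_rfl
    rw [List.take_length, hw] at this
    exact this
  have hj₀pos : 0 < j₀ := by
    rcases Nat.eq_zero_or_pos j₀ with h | h
    · exfalso
      rw [h] at hj₀eq
      simp [dd_nil] at hj₀eq
      omega
    · exact h
  by_cases hcase : j₀ = w.length
  · refine ⟨0, hNpos, ?_⟩
    rw [List.rotate_zero]
    refine ⟨hw, fun p hp hne => ?_⟩
    have hpt := prefix_eq_take hp
    have hplen : p.length < w.length := by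
      rcases lt_or_eq_of_le hp.length_le with h | h
      · exact h
      · exact absurd (by rw [hpt, h, List.take_length]) hne
    have h1 := hfirst p.length (by omega)
    have hmu : μ = -1 := by
      have h2 := hj₀eq
      rw [hcase, List.take_length, hw] at h2
      omega
    rw [← hpt] at h1
    omega
  · have hj₀lt : j₀ < w.length := lt_of_le_of_ne (hj₀def ▸ hj₀le) hcase
    refine ⟨j₀, hj₀lt, ?_⟩
    have hrot : w.rotate j₀ = w.drop j₀ ++ w.take j₀ :=
      List.rotate_eq_drop_append_take (le_of_lt hj₀lt)
    have hddr : dd k (w.rotate j₀) = -1 := by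
      rw [dd_perm (List.rotate_perm w j₀), hw]
    refine ⟨hddr, fun p hp hne => ?_⟩
    have hlenr : (w.rotate j₀).length = w.length := List.length_rotate w j₀
    have hpt : p = (w.rotate j₀).take p.length := prefix_eq_take hp
    set L := p.length with hL
    have hjlt : L < w.length := by
      have hle := hp.length_le
      rw [hlenr] at hle
      rcases lt_or_eq_of_le hle with h | h
      · exact h
      · refine absurd ?_ hne
        rw [hpt, hL, h, ← hlenr, List.take_length]
    have hj₀eq' : dd k (w.take j₀) = μ := hj₀def ▸ hj₀eq
    by_cases hsmall : L ≤ w.length - j₀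
    · have hpeq : p = (w.drop j₀).take L := by
        conv_lhs => rw [hpt]
        rw [hrot, List.take_append_of_le_length (by rw [List.length_drop]; omega)]
      have hsplit : w.take (j₀ + L) = w.take j₀ ++ (w.drop j₀).take L := by
        rw [← List.take_add]
      have hkey : dd k (w.take (j₀ + L)) = dd k (w.take j₀) + dd k p := by
        rw [hsplit, dd_append, ← hpeq]
      have hge := hμle (j₀ + L) (by omega)
      rw [hkey, hj₀eq'] at hge
      omega
    · push_neg at hsmall
      have htpos : 0 < L - (w.length - j₀) := by omega
      have htlt : L - (w.length - j₀) < j₀ := by omega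
      have hpeq : p = w.drop j₀ ++ w.take (L - (w.length - j₀)) := by
        conv_lhs => rw [hpt]
        rw [hrot]
        rw [List.take_append]
        congr 1
        · rw [List.take_of_length_le (by rw [List.length_drop]; omega)]
        · rw [List.length_drop, List.take_take]
          congr 1
          omega
      have hSt := hfirst _ htlt
      rw [hpeq, dd_append]
      have hddrop : dd k (w.take j₀) + dd k (w.drop j₀) = dd k w := by
        rw [← dd_append, List.take_append_drop]
      omega

theorem pair_sublist_flatten {α : Type*} {a b : α} :
    ∀ (L : List (List α)) (i j : ℕ), i < j → ∀ (hi : i < L.length) (hj : j < L.length),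
      a ∈ L[i] → b ∈ L[j] → List.Sublist [a, b] L.flatten := by
  intro L
  induction L with
  | nil => intro i j _ hi; simp at hi
  | cons u L ih =>
    intro i j hij hi hj ha hb
    match i, j with
    | 0, (j'+1) =>
      rw [List.getElem_cons_zero] at ha
      rw [List.getElem_cons_succ] at hb
      rw [List.flatten_cons]
      have hbf : b ∈ L.flatten := List.mem_flatten.2 ⟨_, List.getElem_mem _, hb⟩
      exact List.Sublist.append (List.singleton_sublist.2 ha) (List.singleton_sublist.2 hbf)
    | (i'+1), (j'+1) =>
      rw [List.getElem_cons_succ] at ha hb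
      rw [List.flatten_cons]
      exact (ih i' j' (by omega) (by simpa using hi) (by simpa using hj) ha hb).trans
        (List.sublist_append_right _ _)

/-- splitting a pair-sublist of a flatten -/
theorem flatten_pair_split {α : Type*} {a b : α} :
    ∀ (L : List (List α)), List.Sublist [a, b] L.flatten →
      (∃ l ∈ L, List.Sublist [a, b] l) ∨
      (∃ i j, i < j ∧ ∃ (hj : j < L.length), ∃ (hi : i < L.length), a ∈ L[i] ∧ b ∈ L[j]) := by
  intro L
  induction L with
  | nil => intro h; simp at h
  | cons u L ih =>
    intro h
    rw [List.flatten_cons, List.sublist_append_iff] at h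
    obtain ⟨l₁, l₂, heq, h₁, h₂⟩ := h
    match l₁, heq with
    | [], heq =>
      simp only [List.nil_append] at heq
      subst heq
      rcases ih h₂ with ⟨l, hl, hab⟩ | ⟨i, j, hij, hj, hi, ha, hb⟩
      · exact Or.inl ⟨l, List.mem_cons_of_mem _ hl, hab⟩
      · exact Or.inr ⟨i+1, j+1, by omega, by simpa using hj, by simpa using hi, by simpa using ha,
          by simpa using hb⟩
    | [x], heq =>
      simp only [List.cons_append, List.nil_append] at heq
      have hx : x = a := by injection heq with h _; exact h.symm
      have hl₂ : l₂ = [b] := by injection heq with _ h; exact h.symm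
      subst hx hl₂
      have hb : b ∈ L.flatten := List.singleton_sublist.1 h₂
      obtain ⟨l, hl, hbl⟩ := List.mem_flatten.1 hb
      obtain ⟨j', hj', hjl⟩ := List.mem_iff_getElem.1 hl
      refine Or.inr ⟨0, j'+1, by omega, by simpa using hj', by simp, ?_, ?_⟩
      · simpa using List.singleton_sublist.1 h₁
      · rw [List.getElem_cons_succ, hjl]; exact hbl
    | [x, y], heq =>
      simp only [List.cons_append, List.nil_append] at heq
      have h1' : a = x := by injection heq
      have h2' : [b] = y :: l₂ := by injection heq
      have h3' : b = y := by injection h2'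
      subst h1' h3'
      exact Or.inl ⟨u, List.mem_cons_self, h₁⟩
    | (x :: y :: z :: l), heq =>
      exfalso
      have := congrArg List.length heq
      simp at this


namespace KTree

theorem wr_sublist_pair {a b : ℕ} : ∀ {t : KTree}, t.WR a b → List.Sublist [a, b] t.labels := by
  intro t h
  induction h with
  | desc x c a b hx hb =>
    obtain ⟨u, hu, hbu⟩ := hb
    subst hx
    rw [labels_node]
    exact (List.singleton_sublist.2
      (List.mem_flatten.2 ⟨labels u, List.mem_map_of_mem hu, hbu⟩)).cons₂ x
  | branch x c a b hij =>
    obtain ⟨i, j, hij, hj, ha, hb⟩ := hij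
    have hi : i < c.length := lt_trans hij hj
    rw [labels_node]
    refine List.Sublist.cons x ?_
    rw [List.getD_eq_getElem c .leaf hi] at ha
    rw [List.getD_eq_getElem c .leaf hj] at hb
    refine pair_sublist_flatten (c.map labels) i j hij (by simpa using hi) (by simpa using hj) ?_ ?_
    · rw [List.getElem_map]; exact ha
    · rw [List.getElem_map]; exact hb
  | sub x c a b u hu _ ih =>
    rw [labels_node]
    exact List.Sublist.cons x (ih.trans (List.sublist_flatten_of_mem (List.mem_map_of_mem hu)))

end KTree

theorem noswap {α : Type*} {a b : α} : ∀ {l : List α}, l.Nodup →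
    List.Sublist [a, b] l → List.Sublist [b, a] l → a = b := by
  intro l
  induction l with
  | nil => intro _ h; simp at h
  | cons x l ih =>
    intro hnd h1 h2
    rcases List.sublist_cons_iff.1 h1 with h1' | ⟨r1, hr1, hr1'⟩
    · rcases List.sublist_cons_iff.1 h2 with h2' | ⟨r2, hr2, hr2'⟩
      · exact ih (List.nodup_cons.1 hnd).2 h1' h2'
      · have hb : b ∈ l := h1'.subset (by simp)
        have hx : x = b := by injection hr2 with h _; exact h.symm
        exact absurd (hx ▸ hb) (List.nodup_cons.1 hnd).1
    · have hx : x = a := by injection hr1 with h _; exact h.symm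
      have hr : r1 = [b] := by injection hr1 with _ h; exact h.symm
      subst hr
      have hb : b ∈ l := hr1'.subset (by simp)
      rcases List.sublist_cons_iff.1 h2 with h2' | ⟨r2, hr2, hr2'⟩
      · have ha : a ∈ l := h2'.subset (by simp)
        exact absurd (hx ▸ ha) (List.nodup_cons.1 hnd).1
      · have hx2 : x = b := by injection hr2 with h _; exact h.symm
        rw [← hx, ← hx2]

namespace KTree

theorem canonical_pairwise {t : KTree} (hc : t.CanonicalK) (hnd : t.labels.Nodup) :
    t.labels.Pairwise (· < ·) := by
  rw [List.pairwise_iff_forall_sublist]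
  intro a b hab
  have hne : a ≠ b := (List.pairwise_iff_forall_sublist.1 hnd) hab
  rcases lt_or_gt_of_ne hne with h | h
  · exact h
  · exfalso
    have hmema : a ∈ t.labels := hab.subset (by simp)
    have hmemb : b ∈ t.labels := hab.subset (by simp)
    have hwr := hc b a hmemb hmema h
    exact hne (noswap hnd hab (wr_sublist_pair hwr))

theorem sublist_pair_of_sorted {l : List ℕ} (h : l.Pairwise (· < ·)) {a b : ℕ}
    (ha : a ∈ l) (hb : b ∈ l) (hab : a < b) : List.Sublist [a, b] l := by
  induction l with
  | nil => cases ha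
  | cons x l ih =>
    rcases List.mem_cons.1 ha with rfl | ha'
    · have hb' : b ∈ l := by
        rcases List.mem_cons.1 hb with rfl | h' 
        · omega
        · exact h'
      exact (List.singleton_sublist.2 hb').cons₂ a
    · rcases List.mem_cons.1 hb with rfl | hb'
      · exact absurd ((List.pairwise_cons.1 h).1 a ha') (by omega)
      · exact ((ih (List.pairwise_cons.1 h).2 ha' hb')).cons x

theorem incr_of_pairwise : ∀ t : KTree, t.labels.Pairwise (· < ·) → t.Incr := by
  refine KTree.ind _ (fun _ => Incr.leaf) ?_
  intro x c IH h
  rw [labels_node] at h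
  obtain ⟨h1, h2⟩ := List.pairwise_cons.1 h
  refine Incr.node x c ?_ ?_
  · intro u hu y hy
    exact h1 y (List.mem_flatten.2 ⟨labels u, List.mem_map_of_mem hu, hy⟩)
  · intro u hu
    exact IH u hu (h2.sublist (List.sublist_flatten_of_mem (List.mem_map_of_mem hu)))

theorem canonical_of_pairwise : ∀ t : KTree, t.labels.Pairwise (· < ·) → t.CanonicalK := by
  refine KTree.ind _ ?_ ?_
  · intro _ l₁ l₂ h1 _ _
    simp [labels] at h1
  · intro x c IH hp l₁ l₂ h1 h2 hlt
    have hab := sublist_pair_of_sorted hp h1 h2 hlt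
    rw [labels_node] at hab
    rcases List.sublist_cons_iff.1 hab with hF | ⟨r, hr, hr'⟩
    · rcases flatten_pair_split _ hF with ⟨l, hl, hpair⟩ | ⟨i, j, hij, hj, hi, ha, hb⟩
      · obtain ⟨u, hu, rfl⟩ := List.mem_map.1 hl
        have hpu : (labels u).Pairwise (· < ·) := by
          rw [labels_node] at hp
          exact (List.pairwise_cons.1 hp).2.sublist
            (List.sublist_flatten_of_mem (List.mem_map_of_mem hu))
        exact WR.sub x c l₁ l₂ u hu
          (IH u hu hpu l₁ l₂ (hpair.subset (by simp)) (hpair.subset (by simp)) hlt)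
      · have hj' : j < c.length := by simpa using hj
        have hi' : i < c.length := by simpa using hi
        refine WR.branch x c l₁ l₂ ⟨i, j, hij, hj', ?_, ?_⟩
        · rw [List.getD_eq_getElem c .leaf hi']
          rw [List.getElem_map] at ha
          exact ha
        · rw [List.getD_eq_getElem c .leaf hj']
          rw [List.getElem_map] at hb
          exact hb
    · have hx : x = l₁ := by injection hr with h _; exact h.symm
      have hrr : r = [l₂] := by injection hr with _ h; exact h.symm
      subst hrr
      have hl₂ : l₂ ∈ (c.map labels).flatten := hr'.subset (by simp)
      obtain ⟨l, hl, hbl⟩ := List.mem_flatten.1 hl₂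
      obtain ⟨u, hu, rfl⟩ := List.mem_map.1 hl
      exact WR.desc x c l₁ l₂ hx ⟨u, hu, hbl⟩

theorem mem_S_iff (k n : ℕ) (t : KTree) :
    (IsLabeledKTree k n t ∧ t.CanonicalK) ↔ (t.Arity k ∧ t.labels = List.range' 1 n) := by
  constructor
  · rintro ⟨⟨hA, hperm, _⟩, hc⟩
    refine ⟨hA, ?_⟩
    haveI : IsAntisymm ℕ (· < ·) := ⟨fun a b h1 h2 => by omega⟩
    have hnd : t.labels.Nodup := (hperm.nodup_iff).2 (List.nodup_range' (s := 1) (n := n))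
    exact List.Perm.eq_of_pairwise (fun a b _ _ h1 h2 => by omega) (canonical_pairwise hc hnd)
      (List.pairwise_lt_range' (s := 1) (n := n)) hperm
  · rintro ⟨hA, heq⟩
    have hp : t.labels.Pairwise (· < ·) := heq ▸ List.pairwise_lt_range' (s := 1) (n := n)
    exact ⟨⟨hA, heq ▸ List.Perm.refl _, incr_of_pairwise t hp⟩, canonical_of_pairwise t hp⟩

end KTree

namespace KTree

theorem count_enc : ∀ t : KTree, (enc t).count true = (labels t).length := by
  refine KTree.ind _ ?_ ?_
  · rw [enc]; simp [labels]
  · intro x c IH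
    rw [enc_node, labels_node]
    simp only [List.count_cons, List.length_cons, List.count_flatten, List.length_flatten,
      List.map_map]
    have : (c.map (List.count true ∘ enc)).sum = (c.map (List.length ∘ labels)).sum := by
      congr 1
      exact List.map_congr_left (fun t ht => IH t ht)
    simp only [this]
    simp

theorem arity_okc {k : ℕ} : ∀ {t : KTree}, Arity k t → OKC k (enc t) := by
  intro t h
  induction h with
  | leaf => rw [enc]; exact OKC.leaf
  | node x c hlen hall ih =>
    rw [enc_node]
    refine OKC.node (c.map enc) (by simpa using hlen) ?_
    intro w hw
    obtain ⟨u, hu, rfl⟩ := List.mem_map.1 hw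
    exact ih u hu

theorem unique_parse {k : ℕ} : ∀ t : KTree, Arity k t → ∀ s : KTree, Arity k s →
    ∀ u v : List Bool, enc t ++ u = enc s ++ v → enc t = enc s ∧ u = v := by
  refine KTree.ind _ ?_ ?_
  · intro _ s hs u v heq
    cases s with
    | leaf => rw [enc] at heq ⊢; exact ⟨rfl, by injection heq⟩
    | node y d =>
      rw [enc, enc_node] at heq
      exact absurd heq (by simp)
  · intro x c IH hA s hs u v heq
    cases s with
    | leaf =>
      rw [enc_node, enc] at heq
      exact absurd heq (by simp)
    | node y d =>
      rw [enc_node, enc_node] at heq ⊢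
      cases hA with | node _ _ hclen hcall =>
      cases hs with | node _ _ hdlen hdall =>
      have hlen : c.length = d.length := by omega
      simp only [List.cons_append] at heq
      have heq' : (c.map enc).flatten ++ u = (d.map enc).flatten ++ v := by
        injection heq with _ h
      clear heq
      have inner : ∀ (c d : List KTree), c.length = d.length →
          (∀ t ∈ c, Arity k t) → (∀ s ∈ d, Arity k s) →
          (∀ t ∈ c, Arity k t → ∀ s : KTree, Arity k s →
            ∀ u v : List Bool, enc t ++ u = enc s ++ v → enc t = enc s ∧ u = v) →
          ∀ u v : List Bool, (c.map enc).flatten ++ u = (d.map enc).flatten ++ v →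
            (c.map enc).flatten = (d.map enc).flatten ∧ u = v := by
        clear heq' hlen hclen hdlen hcall hdall IH
        intro c
        induction c with
        | nil =>
          intro d hlen _ _ _ u v heq
          have hd : d = [] := List.length_eq_zero_iff.1 (by simpa using hlen.symm)
          subst hd
          simp at heq ⊢
          exact heq
        | cons t c' ihc =>
          intro d hlen hac had hIH u v heq
          cases d with
          | nil => simp at hlen
          | cons s d' =>
            simp only [List.map_cons, List.flatten_cons, List.append_assoc] at heq ⊢
            obtain ⟨h1, h2⟩ := hIH t (by simp) (hac t (by simp)) s (had s (by simp)) _ _ heq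
            obtain ⟨h3, h4⟩ := ihc d' (by simpa using hlen) (fun t ht => hac t (by simp [ht]))
              (fun s hs => had s (by simp [hs]))
              (fun t ht => hIH t (by simp [ht])) u v h2
            exact ⟨by rw [h1, h3], h4⟩
      obtain ⟨h1, h2⟩ := inner c d hlen hcall hdall
        (fun t ht _ => IH t ht (hcall t ht)) u v heq'
      exact ⟨by rw [h1], h2⟩

theorem enc_labels_inj {k : ℕ} : ∀ t : KTree, Arity k t → ∀ s : KTree, Arity k s →
    enc t = enc s → labels t = labels s → t = s := by
  refine KTree.ind _ ?_ ?_
  · intro _ s hs henc _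
    cases s with
    | leaf => rfl
    | node y d =>
      rw [enc, enc_node] at henc
      exact absurd henc (by simp)
  · intro x c IH hA s hs henc hlab
    cases s with
    | leaf =>
      rw [enc_node, enc] at henc
      exact absurd henc (by simp)
    | node y d =>
      cases hA with | node _ _ hclen hcall =>
      cases hs with | node _ _ hdlen hdall =>
      rw [labels_node, labels_node] at hlab
      have hxy : x = y := by injection hlab
      subst hxy
      rw [enc_node, enc_node] at henc
      have henc' : (c.map enc).flatten = (d.map enc).flatten := by injection henc
      have hlab' : (c.map labels).flatten = (d.map labels).flatten := by injection hlab
      have hcd : c = d := by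
        have hlen : c.length = d.length := by omega
        clear hclen hdlen hlab henc
        induction c generalizing d with
        | nil =>
          exact (List.length_eq_zero_iff.1 (by simpa using hlen.symm)).symm
        | cons t c' ihc =>
          cases d with
          | nil => simp at hlen
          | cons s d' =>
            simp only [List.map_cons, List.flatten_cons] at henc' hlab'
            have hts : enc t = enc s ∧ (c'.map enc).flatten = (d'.map enc).flatten := by
              have := unique_parse t (hcall t (by simp)) s (hdall s (by simp)) _ _ henc'
              exact this
            have hlablen : (labels t).length = (labels s).length := by
              rw [← count_enc, ← count_enc, hts.1]
            obtain ⟨hl1, hl2⟩ := List.append_inj hlab' hlablen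
            have hts' : t = s := IH t (by simp) (hcall t (by simp)) s (hdall s (by simp)) hts.1 hl1
            subst hts'
            have : c' = d' := ihc (fun u hu => IH u (List.mem_cons_of_mem _ hu)) d'
              (fun u hu => hcall u (List.mem_cons_of_mem _ hu))
              (fun u hu => hdall u (List.mem_cons_of_mem _ hu))
              hts.2 hl2 (by simpa using hlen)
            rw [this]
      exact congrArg _ hcd

end KTree


namespace KTree

mutual
def lab : KTree → ℕ → KTree
  | .leaf, _ => .leaf
  | .node _ c, m => .node m (labL c (m+1))
def labL : List KTree → ℕ → List KTree
  | [], _ => []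
  | t :: ts, m => lab t m :: labL ts (m + (labels t).length)
end

theorem labL_map_enc : ∀ (ts : List KTree) (m : ℕ),
    (∀ t ∈ ts, ∀ m', enc (lab t m') = enc t) → (labL ts m).map enc = ts.map enc := by
  intro ts
  induction ts with
  | nil => intro m _; rfl
  | cons t ts ih =>
    intro m h
    rw [labL, List.map_cons, List.map_cons, h t (by simp) m,
      ih _ (fun u hu m' => h u (List.mem_cons_of_mem _ hu) m')]

theorem enc_lab : ∀ (t : KTree) (m : ℕ), enc (lab t m) = enc t := by
  refine KTree.ind _ ?_ ?_
  · intro m; rw [lab]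
  · intro x c IH m
    rw [lab, enc_node, enc_node, labL_map_enc c (m+1) (fun u hu m' => IH u hu m')]

theorem labL_length : ∀ (ts : List KTree) (m : ℕ), (labL ts m).length = ts.length := by
  intro ts
  induction ts with
  | nil => intro m; rfl
  | cons t ts ih => intro m; rw [labL, List.length_cons, List.length_cons, ih]

theorem labL_mem : ∀ (ts : List KTree) (m : ℕ) (u : KTree), u ∈ labL ts m →
    ∃ t ∈ ts, ∃ m', u = lab t m' := by
  intro ts
  induction ts with
  | nil => intro m u h; rw [labL] at h; cases h
  | cons t ts ih =>
    intro m u h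
    rw [labL] at h
    rcases List.mem_cons.1 h with rfl | h'
    · exact ⟨t, by simp, m, rfl⟩
    · obtain ⟨t', ht', m', rfl⟩ := ih _ u h'
      exact ⟨t', List.mem_cons_of_mem _ ht', m', rfl⟩

theorem arity_lab {k : ℕ} : ∀ {t : KTree}, Arity k t → ∀ m, Arity k (lab t m) := by
  intro t h
  induction h with
  | leaf => intro m; rw [lab]; exact Arity.leaf
  | node x c hlen hall ih =>
    intro m
    rw [lab]
    refine Arity.node _ _ (by rw [labL_length]; exact hlen) ?_
    intro u hu
    obtain ⟨t', ht', m', rfl⟩ := labL_mem c _ u hu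
    exact ih t' ht' m'

theorem labL_labels : ∀ (ts : List KTree) (m : ℕ),
    (∀ t ∈ ts, ∀ m', labels (lab t m') = List.range' m' (labels t).length) →
    ((labL ts m).map labels).flatten =
      List.range' m ((ts.map (fun t => (labels t).length)).sum) := by
  intro ts
  induction ts with
  | nil => intro m _; rfl
  | cons t ts ih =>
    intro m h
    rw [labL, List.map_cons, List.flatten_cons, h t (by simp) m,
      ih _ (fun u hu m' => h u (List.mem_cons_of_mem _ hu) m'), List.map_cons, List.sum_cons]
    have := List.range'_append (s := m) (m := (labels t).length) (n := (ts.map (fun t => (labels t).length)).sum) (step := 1)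
    rw [one_mul] at this
    rw [this, Nat.add_comm]

theorem labels_lab : ∀ (t : KTree) (m : ℕ), labels (lab t m) = List.range' m (labels t).length := by
  refine KTree.ind _ ?_ ?_
  · intro m; rw [lab]; simp [labels]
  · intro x c IH m
    rw [lab, labels_node, labels_node, labL_labels c (m+1) (fun u hu m' => IH u hu m')]
    rw [List.length_cons, List.length_flatten, List.map_map]
    rw [List.range'_succ]
    rfl

end KTree


theorem okc_tree {k : ℕ} : ∀ {w : List Bool}, OKC k w → ∃ t : KTree, t.Arity k ∧ t.enc = w := by
  intro w h
  induction h with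
  | leaf => exact ⟨.leaf, KTree.Arity.leaf, by rw [KTree.enc]⟩
  | node ws hlen hall ih =>
    have inner : ∀ ws' : List (List Bool), (∀ w ∈ ws', ∃ t : KTree, t.Arity k ∧ t.enc = w) →
        ∃ ts : List KTree, (∀ t ∈ ts, KTree.Arity k t) ∧ ts.map KTree.enc = ws' := by
      intro ws'
      induction ws' with
      | nil => intro _; exact ⟨[], by simp, rfl⟩
      | cons w' ws' ihl =>
        intro h
        obtain ⟨t, ht1, ht2⟩ := h w' (by simp)
        obtain ⟨ts, hts1, hts2⟩ := ihl (fun u hu => h u (List.mem_cons_of_mem _ hu))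
        refine ⟨t :: ts, ?_, by rw [List.map_cons, ht2, hts2]⟩
        intro u hu
        rcases List.mem_cons.1 hu with rfl | hu'
        · exact ht1
        · exact hts1 u hu'
    obtain ⟨ts, h1, h2⟩ := inner ws ih
    refine ⟨.node 0 ts, KTree.Arity.node _ _ ?_ h1, by rw [KTree.enc_node, h2]⟩
    rw [← hlen, ← h2, List.length_map]

theorem count_decide_mem {N : ℕ} (s : Finset (Fin N)) :
    ((List.finRange N).map (fun i => decide (i ∈ s))).count true = s.card := by
  classical
  have h1 : ((List.finRange N).map (fun i => decide (i ∈ s))).count true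
      = (List.finRange N).countP (fun i => decide (i ∈ s)) := by
    rw [List.count, List.countP_map]
    congr 1
    funext i
    simp
  rw [h1, List.countP_eq_length_filter]
  have hnd : ((List.finRange N).filter (fun i => decide (i ∈ s))).Nodup :=
    (List.nodup_finRange N).filter _
  rw [← List.toFinset_card_of_nodup hnd, List.toFinset_filter, List.toFinset_finRange]
  have : (Finset.univ.filter fun i : Fin N => decide (i ∈ s) = true) = s := by
    rw [Finset.filter_congr (fun i _ => by simp : ∀ i ∈ Finset.univ,
      (decide (i ∈ s) = true) ↔ (i ∈ s))]
    exact Finset.filter_univ_mem s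
  rw [this]

/-- The number of canonical labeled `k`-ary trees with `n` nodes (equivalently, unlabeled
`k`-ary trees with `n` nodes) is the Fuss–Catalan number `(1/(kn+1)) C(kn+1, n)`. -/
theorem canonicalKTree_card (k n : ℕ) (hk : 1 ≤ k) :
    (k * n + 1) * {t : KTree | IsLabeledKTree k n t ∧ t.CanonicalK}.ncard
      = Nat.choose (k * n + 1) n := by
  classical
  set N := k * n + 1 with hN
  set wordsN : Finset (List Bool) :=
    ((Finset.univ : Finset (Fin N → Bool)).image (fun f => (List.finRange N).map f)).filter
      (fun w => w.count true = n) with hwordsN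
  have hmemW : ∀ w : List Bool, w ∈ wordsN ↔ (w.length = N ∧ w.count true = n) := by
    intro w
    simp only [hwordsN, Finset.mem_filter, Finset.mem_image, Finset.mem_univ, true_and]
    constructor
    · rintro ⟨⟨f, rfl⟩, h2⟩
      exact ⟨by simp, h2⟩
    · rintro ⟨h1, h2⟩
      refine ⟨⟨fun i => w.getD i false, ?_⟩, h2⟩
      refine List.ext_getElem (by simp [h1]) ?_
      intro i hi1 hi2
      simp only [List.getElem_map, List.getElem_finRange]
      rw [List.getD_eq_getElem w false (by simp at hi1; omega)]
      simp
  have hval : ∀ (g : Fin N → Bool) (i : Fin N), ((List.finRange N).map g).getD (i : ℕ) false = g i := by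
    intro g i
    rw [List.getD_eq_getElem _ _ (by simp [i.isLt])]
    simp only [List.getElem_map, List.getElem_finRange]
    congr 1
  have hcard_words : wordsN.card = Nat.choose N n := by
    have hpc := Finset.card_powersetCard n (Finset.univ : Finset (Fin N))
    rw [Finset.card_univ, Fintype.card_fin] at hpc
    rw [← hpc]
    refine (Finset.card_bij (fun s _ => (List.finRange N).map (fun i => decide (i ∈ s)))
      ?_ ?_ ?_).symm
    · intro s hs
      rw [hmemW]
      refine ⟨by simp, ?_⟩
      rw [count_decide_mem]
      exact (Finset.mem_powersetCard.1 hs).2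
    · intro s1 h1 s2 h2 heq
      ext i
      have hi := congrArg (fun l : List Bool => l.getD (i : ℕ) false) heq
      simp only [hval] at hi
      simpa using hi
    · intro w hw
      obtain ⟨hlen, hcnt⟩ := (hmemW w).1 hw
      set s : Finset (Fin N) := Finset.univ.filter (fun i => w.getD (i : ℕ) false = true) with hs
      have hjw : (List.finRange N).map (fun i => decide (i ∈ s)) = w := by
        refine List.ext_getElem (by simp [hlen]) ?_
        intro i hi1 hi2
        have hiw : i < w.length := hi2
        have hiN : i < N := by omega
        have hstep : (List.map (fun j => decide (j ∈ s)) (List.finRange N))[i]'(by simpa using hi1)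
            = decide ((⟨i, hiN⟩ : Fin N) ∈ s) := by
          simp only [List.getElem_map, List.getElem_finRange]
          rfl
        refine hstep.trans ?_
        have hmem : (⟨i, hiN⟩ : Fin N) ∈ s ↔ w[i] = true := by
          simp only [hs, Finset.mem_filter, Finset.mem_univ, true_and]
          rw [List.getD_eq_getElem w false hiw]
        by_cases hb : w[i] = true
        · simp [hmem, hb]
        · simp only [Bool.not_eq_true] at hb
          simp [hmem, hb]
      refine ⟨s, ?_, hjw⟩
      rw [Finset.mem_powersetCard]
      refine ⟨Finset.subset_univ s, ?_⟩
      have := count_decide_mem s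
      rw [hjw, hcnt] at this
      omega
  set codesF : Finset (List Bool) := wordsN.filter (fun w => OKC k w) with hcodesF
  have hlenOKC : ∀ w : List Bool, OKC k w → w.count true = n → w.length = N := by
    intro w hok hcnt
    have hg := okc_good hk hok
    have := hg.1
    rw [dd, hcnt] at this
    have h2 : (w.length : ℤ) = (N : ℤ) := by
      rw [hN]
      push_cast at this ⊢
      omega
    exact_mod_cast h2
  have hmemC : ∀ w : List Bool, w ∈ codesF ↔ (OKC k w ∧ w.count true = n) := by
    intro w
    rw [hcodesF, Finset.mem_filter, hmemW]
    constructor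
    · rintro ⟨⟨_, h2⟩, h3⟩; exact ⟨h3, h2⟩
    · rintro ⟨h1, h2⟩; exact ⟨⟨hlenOKC w h1 h2, h2⟩, h1⟩
  have himg : KTree.enc '' {t : KTree | IsLabeledKTree k n t ∧ t.CanonicalK} = ↑codesF := by
    ext w
    simp only [Set.mem_image, Set.mem_setOf_eq, Finset.mem_coe]
    constructor
    · rintro ⟨t, ht, rfl⟩
      rw [KTree.mem_S_iff] at ht
      rw [hmemC]
      exact ⟨KTree.arity_okc ht.1, by rw [KTree.count_enc, ht.2, List.length_range']⟩
    · intro hw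
      rw [hmemC] at hw
      obtain ⟨t₀, hA, rfl⟩ := okc_tree hw.1
      refine ⟨KTree.lab t₀ 1, ?_, KTree.enc_lab t₀ 1⟩
      rw [KTree.mem_S_iff]
      refine ⟨KTree.arity_lab hA 1, ?_⟩
      rw [KTree.labels_lab]
      congr 1
      rw [← KTree.count_enc]
      exact hw.2
  have hinj : Set.InjOn KTree.enc {t : KTree | IsLabeledKTree k n t ∧ t.CanonicalK} := by
    intro t ht s hs heq
    rw [Set.mem_setOf_eq, KTree.mem_S_iff] at ht hs
    exact KTree.enc_labels_inj t ht.1 s hs.1 heq (by rw [ht.2, hs.2])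
  have hncard : {t : KTree | IsLabeledKTree k n t ∧ t.CanonicalK}.ncard = codesF.card := by
    rw [← Set.ncard_image_of_injOn hinj, himg, Set.ncard_coe_finset]
  have hNpos : 0 < N := by omega
  have hkey : wordsN = (codesF ×ˢ Finset.range N).image (fun p => p.1.rotate p.2) := by
    ext w
    constructor
    · intro hw
      obtain ⟨hlen, hcnt⟩ := (hmemW w).1 hw
      have hdd : dd k w = -1 := by
        rw [dd, hcnt, hlen, hN]
        push_cast
        ring
      obtain ⟨i, hi, hgood⟩ := good_rotate_exists hdd
      rw [hlen] at hi
      have hOKC : OKC k (w.rotate i) := good_okc hk N _ (by rw [List.length_rotate]; omega) hgood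
      refine Finset.mem_image.2 ⟨(w.rotate i, (N - i) % N), ?_, ?_⟩
      · refine Finset.mem_product.2 ⟨?_, Finset.mem_range.2 (Nat.mod_lt _ hNpos)⟩
        rw [hmemC]
        exact ⟨hOKC, by rw [(List.rotate_perm w i).count_eq]; exact hcnt⟩
      · show (w.rotate i).rotate ((N - i) % N) = w
        rw [List.rotate_rotate]
        rcases Nat.eq_zero_or_pos i with rfl | hipos
        · rw [Nat.zero_add, Nat.sub_zero, ← hlen, Nat.mod_self, List.rotate_zero]
        · rw [Nat.mod_eq_of_lt (by omega), show i + (N - i) = N from by omega, ← hlen,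
            List.rotate_length]
    · intro hw
      obtain ⟨⟨c, j⟩, hp, rfl⟩ := Finset.mem_image.1 hw
      obtain ⟨hc, hj⟩ := Finset.mem_product.1 hp
      rw [hmemC] at hc
      have hclen : c.length = N := hlenOKC c hc.1 hc.2
      rw [hmemW]
      exact ⟨by rw [List.length_rotate, hclen], by rw [(List.rotate_perm c j).count_eq]; exact hc.2⟩
  have hinj2 : Set.InjOn (fun p : List Bool × ℕ => p.1.rotate p.2) ↑(codesF ×ˢ Finset.range N) := by
    rintro ⟨c₁, j₁⟩ h1 ⟨c₂, j₂⟩ h2 heq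
    simp only [Finset.mem_coe] at h1 h2
    obtain ⟨hc₁, hj₁⟩ := Finset.mem_product.1 h1
    obtain ⟨hc₂, hj₂⟩ := Finset.mem_product.1 h2
    rw [hmemC] at hc₁ hc₂
    rw [Finset.mem_range] at hj₁ hj₂
    have hl1 : c₁.length = N := hlenOKC c₁ hc₁.1 hc₁.2
    have hl2 : c₂.length = N := hlenOKC c₂ hc₂.1 hc₂.2
    have hg1 : GoodP k c₁ := okc_good hk hc₁.1
    have hg2 : GoodP k c₂ := okc_good hk hc₂.1
    simp only [] at heq
    have hc2eq : c₂ = c₁.rotate ((j₁ + (N - j₂)) % N) := by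
      have e1 : (c₂.rotate j₂).rotate (N - j₂) = c₂ := by
        rw [List.rotate_rotate, show j₂ + (N - j₂) = N from by omega, ← hl2, List.rotate_length]
      have e2 : c₁.rotate ((j₁ + (N - j₂)) % N) = c₁.rotate (j₁ + (N - j₂)) := by
        have := List.rotate_mod c₁ (j₁ + (N - j₂))
        rw [hl1] at this
        exact this
      rw [e2, ← List.rotate_rotate, heq, e1]
    have hd0 : (j₁ + (N - j₂)) % N = 0 := by
      refine good_rotate_unique hg1 ?_ (hc2eq ▸ hg2)
      rw [hl1]
      exact Nat.mod_lt _ hNpos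
    obtain ⟨q, hq⟩ := Nat.dvd_of_mod_eq_zero hd0
    have hj12 : j₁ = j₂ := by
      rcases q with _ | _ | q
      · omega
      · omega
      · have : N * (q + 1 + 1) = N * q + 2 * N := by ring
        omega
    have hceq : c₁ = c₂ := by
      rw [hc2eq, hd0, List.rotate_zero]
    rw [hceq, hj12]
  have hfinal : wordsN.card = codesF.card * N := by
    rw [hkey, Finset.card_image_of_injOn hinj2, Finset.card_product, Finset.card_range]
  rw [hncard, ← hcard_words, hfinal, Nat.mul_comm]
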